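/- Fix odd n. If Q is a Hermitian operator on (C²)^{⊗n} satisfying Q ≥ ρ^n_{o₊ +} + ρ^n_{o_× ×} for all o₊, o_× ∈ {0,1} (where ρ^n_{y b} = 2^{−(n−1)} Σ_{⊕x = y} U_b|x⟩⟨x|U_b†, U_+ = I^{⊗n}, U_× = H^{⊗n}), then Q ⊗ ¼I₄ on (C²)^{⊗(n+2)} satisfies the analogous constraints for strings of length n+2. -/

import Mathlib

open Matrix
open scoped ComplexOrder Kronecker

/-- The `n`-fold tensor power `H^{⊗n}` of the Hadamard matrix. -/
noncomputable def Hn (n : ℕ) : Matrix (Fin n → Bool) (Fin n → Bool) ℂ :=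
  Matrix.of fun x y => (∏ i, if x i && y i then (-1 : ℂ) else 1) / (Real.sqrt 2 : ℂ) ^ n

/-- The XOR of the bits of the string `x`. -/
def xorf {n : ℕ} (x : Fin n → Bool) : Bool := (List.ofFn x).foldr xor false

/-- `ρⁿ_{y,+} = 2^{−(n−1)} Σ_{⊕x = y} |x⟩⟨x|`. -/
noncomputable def rhoXorP (n : ℕ) (y : Bool) : Matrix (Fin n → Bool) (Fin n → Bool) ℂ :=
  ((2 : ℂ) ^ (n - 1))⁻¹ •
    ∑ x ∈ Finset.univ.filter (fun x => xorf x = y), Matrix.single x x 1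

/-- `ρⁿ_{y,×} = 2^{−(n−1)} Σ_{⊕x = y} H^{⊗n}|x⟩⟨x|H^{⊗n}†`. -/
noncomputable def rhoXorT (n : ℕ) (y : Bool) : Matrix (Fin n → Bool) (Fin n → Bool) ℂ :=
  ((2 : ℂ) ^ (n - 1))⁻¹ •
    ∑ x ∈ Finset.univ.filter (fun x => xorf x = y),
      Hn n * Matrix.single x x 1 * (Hn n)ᴴ

/-- `ρ^{n+2}_{y,+}` on strings of length `n+2`, realized on the index type
`(Fin n → Bool) × (Fin 2 → Bool)` (concatenation of the string). -/
noncomputable def rhoXorP' (n : ℕ) (y : Bool) :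
    Matrix ((Fin n → Bool) × (Fin 2 → Bool)) ((Fin n → Bool) × (Fin 2 → Bool)) ℂ :=
  ((2 : ℂ) ^ (n + 1))⁻¹ •
    ∑ xz ∈ Finset.univ.filter (fun xz : (Fin n → Bool) × (Fin 2 → Bool) =>
        xor (xorf xz.1) (xorf xz.2) = y),
      Matrix.single xz xz 1

/-- `ρ^{n+2}_{y,×}` on strings of length `n+2`, with `H^{⊗(n+2)} = H^{⊗n} ⊗ H^{⊗2}`. -/
noncomputable def rhoXorT' (n : ℕ) (y : Bool) :
    Matrix ((Fin n → Bool) × (Fin 2 → Bool)) ((Fin n → Bool) × (Fin 2 → Bool)) ℂ :=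
  ((2 : ℂ) ^ (n + 1))⁻¹ •
    ∑ xz ∈ Finset.univ.filter (fun xz : (Fin n → Bool) × (Fin 2 → Bool) =>
        xor (xorf xz.1) (xorf xz.2) = y),
      (Hn n ⊗ₖ Hn 2) * Matrix.single xz xz 1 * (Hn n ⊗ₖ Hn 2)ᴴ

set_option linter.unusedSectionVars false
set_option linter.unusedVariables false

section aux
variable {l m p q : Type*} [Fintype l] [Fintype m] [Fintype p] [Fintype q]
  [DecidableEq l] [DecidableEq m] [DecidableEq p] [DecidableEq q]

lemma kron_conjTranspose (A : Matrix l m ℂ) (B : Matrix p q ℂ) :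
    (A ⊗ₖ B)ᴴ = Aᴴ ⊗ₖ Bᴴ := by
  ext ⟨i, k⟩ ⟨j, l'⟩
  simp [conjTranspose_apply, kroneckerMap_apply, star_mul', mul_comm]

lemma kron_psd {A : Matrix l l ℂ} {B : Matrix p p ℂ}
    (hA : A.PosSemidef) (hB : B.PosSemidef) : (A ⊗ₖ B).PosSemidef := by
  exact hA.kronecker hB

lemma smul_psd {A : Matrix l l ℂ} (hA : A.PosSemidef) {c : ℝ} (hc : 0 ≤ c) :
    ((c : ℂ) • A).PosSemidef := by
  refine posSemidef_iff_dotProduct_mulVec.mpr ⟨?_, fun x => ?_⟩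
  · rw [IsHermitian, conjTranspose_smul, hA.1]
    simp [Complex.conj_ofReal]
  · rw [smul_mulVec, dotProduct_smul, smul_eq_mul]
    exact mul_nonneg (by simp [Complex.le_def, hc]) (hA.dotProduct_mulVec_nonneg x)

lemma vecMulVec_psd (w : l → ℂ) : (vecMulVec w (star w)).PosSemidef := by
  refine posSemidef_iff_dotProduct_mulVec.mpr ⟨?_, fun x => ?_⟩
  · ext i j; simp [vecMulVec_apply, conjTranspose_apply, mul_comm]
  · have hmv : vecMulVec w (star w) *ᵥ x = (star w ⬝ᵥ x) • w := by
      ext i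
      simp only [mulVec, vecMulVec_apply, dotProduct, Pi.smul_apply, smul_eq_mul,
        Pi.star_apply, Finset.sum_mul]
      exact Finset.sum_congr rfl fun j _ => by ring
    rw [hmv, dotProduct_smul]
    have hs : star x ⬝ᵥ w = star (star w ⬝ᵥ x) := by
      simp [dotProduct, mul_comm]
    rw [smul_eq_mul, hs, mul_comm]
    exact star_mul_self_nonneg _

lemma sub_kron (A B : Matrix l m ℂ) (C : Matrix p q ℂ) :
    (A - B) ⊗ₖ C = A ⊗ₖ C - B ⊗ₖ C := by
  ext ⟨i, k⟩ ⟨j, l'⟩; simp [kroneckerMap_apply, sub_mul]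

lemma kron_sub (A : Matrix l m ℂ) (B C : Matrix p q ℂ) :
    A ⊗ₖ (B - C) = A ⊗ₖ B - A ⊗ₖ C := by
  ext ⟨i, k⟩ ⟨j, l'⟩; simp [kroneckerMap_apply, mul_sub]

lemma sum_kron_sum {ι κ : Type*} (s : Finset ι) (t : Finset κ)
    (f : ι → Matrix l m ℂ) (g : κ → Matrix p q ℂ) :
    (∑ x ∈ s, f x) ⊗ₖ (∑ z ∈ t, g z) = ∑ x ∈ s, ∑ z ∈ t, f x ⊗ₖ g z := by
  ext ⟨i, k⟩ ⟨j, l'⟩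
  simp only [kroneckerMap_apply, Matrix.sum_apply, Finset.sum_mul, Finset.mul_sum]
  rw [Finset.sum_comm]

lemma stdBasis_kron (x : l) (z : p) :
    Matrix.single (α := ℂ) (x, z) (x, z) 1
      = Matrix.single x x 1 ⊗ₖ Matrix.single z z 1 := by
  ext ⟨i, k⟩ ⟨j, l'⟩
  simp only [Matrix.single, of_apply, kroneckerMap_apply, Prod.mk.injEq,
    ite_zero_mul_ite_zero]
  exact if_congr (by tauto) (by norm_num) rfl

end aux

lemma sum_split {n : ℕ} {M : Type*} [AddCommMonoid M] (y : Bool)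
    (f : (Fin n → Bool) → (Fin 2 → Bool) → M) :
    ∑ xz ∈ Finset.univ.filter (fun xz : (Fin n → Bool) × (Fin 2 → Bool) =>
        xor (xorf xz.1) (xorf xz.2) = y), f xz.1 xz.2
    = (∑ x ∈ Finset.univ.filter (fun x => xorf x = y),
        ∑ z ∈ Finset.univ.filter (fun z => xorf z = false), f x z)
    + (∑ x ∈ Finset.univ.filter (fun x => xorf x = !y),
        ∑ z ∈ Finset.univ.filter (fun z => xorf z = true), f x z) := by
  rw [Finset.sum_filter, ← Finset.univ_product_univ, Finset.sum_product]
  simp_rw [Finset.sum_filter]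
  rw [← Finset.sum_add_distrib]
  refine Finset.sum_congr rfl fun x _ => ?_
  cases hx : xorf x <;> cases y <;> simp [hx]

lemma scalar_id {n : ℕ} (hn : 1 ≤ n) :
    ((2:ℂ) ^ (n+1))⁻¹ = (2:ℂ)⁻¹ * (((2:ℂ) ^ (n-1))⁻¹ * ((2:ℂ) ^ (2-1))⁻¹) := by
  have h : n - 1 + 2 = n + 1 := by omega
  rw [← h, pow_add]
  norm_num
  ring

lemma L1 {n : ℕ} (hn : 1 ≤ n) (y : Bool) :
    rhoXorP' n y = (2:ℂ)⁻¹ • (rhoXorP n y ⊗ₖ rhoXorP 2 false)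
      + (2:ℂ)⁻¹ • (rhoXorP n (!y) ⊗ₖ rhoXorP 2 true) := by
  unfold rhoXorP' rhoXorP
  simp_rw [Matrix.smul_kronecker, Matrix.kronecker_smul, sum_kron_sum, smul_smul,
    ← mul_assoc]
  rw [show (∑ xz ∈ Finset.univ.filter (fun xz : (Fin n → Bool) × (Fin 2 → Bool) =>
        xor (xorf xz.1) (xorf xz.2) = y), Matrix.single xz xz (1:ℂ))
      = ∑ xz ∈ Finset.univ.filter (fun xz : (Fin n → Bool) × (Fin 2 → Bool) =>
        xor (xorf xz.1) (xorf xz.2) = y),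
        (Matrix.single xz.1 xz.1 1 ⊗ₖ Matrix.single xz.2 xz.2 1) from
    Finset.sum_congr rfl fun xz _ => stdBasis_kron xz.1 xz.2]
  rw [sum_split y (fun x z => Matrix.single x x 1 ⊗ₖ Matrix.single z z 1)]
  rw [smul_add, scalar_id hn]
  ring_nf

lemma L1T {n : ℕ} (hn : 1 ≤ n) (y : Bool) :
    rhoXorT' n y = (2:ℂ)⁻¹ • (rhoXorT n y ⊗ₖ rhoXorT 2 false)
      + (2:ℂ)⁻¹ • (rhoXorT n (!y) ⊗ₖ rhoXorT 2 true) := by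
  unfold rhoXorT' rhoXorT
  simp_rw [Matrix.smul_kronecker, Matrix.kronecker_smul, sum_kron_sum, smul_smul,
    ← mul_assoc]
  rw [show (∑ xz ∈ Finset.univ.filter (fun xz : (Fin n → Bool) × (Fin 2 → Bool) =>
        xor (xorf xz.1) (xorf xz.2) = y),
        (Hn n ⊗ₖ Hn 2) * Matrix.single xz xz (1:ℂ) * (Hn n ⊗ₖ Hn 2)ᴴ)
      = ∑ xz ∈ Finset.univ.filter (fun xz : (Fin n → Bool) × (Fin 2 → Bool) =>
        xor (xorf xz.1) (xorf xz.2) = y),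
        ((Hn n * Matrix.single xz.1 xz.1 1 * (Hn n)ᴴ)
          ⊗ₖ (Hn 2 * Matrix.single xz.2 xz.2 1 * (Hn 2)ᴴ)) from
    Finset.sum_congr rfl fun xz _ => by
      rw [stdBasis_kron xz.1 xz.2, kron_conjTranspose, ← Matrix.mul_kronecker_mul,
        ← Matrix.mul_kronecker_mul]]
  rw [sum_split y (fun x z => (Hn n * Matrix.single x x 1 * (Hn n)ᴴ)
        ⊗ₖ (Hn 2 * Matrix.single z z 1 * (Hn 2)ᴴ))]
  rw [smul_add, scalar_id hn]
  ring_nf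

lemma fin2eta (z : Fin 2 → Bool) : ![z 0, z 1] = z := by
  funext i; fin_cases i <;> rfl

lemma pair_eq_iff (a b c d : Bool) : (![a,b] : Fin 2 → Bool) = ![c,d] ↔ a = c ∧ b = d := by
  constructor
  · intro h
    exact ⟨congrFun h 0, congrFun h 1⟩
  · rintro ⟨rfl, rfl⟩; rfl

lemma sum_fin2bool {M : Type*} [AddCommMonoid M] (f : (Fin 2 → Bool) → M) :
    ∑ z : Fin 2 → Bool, f z
      = f ![true, true] + f ![true, false] + (f ![false, true] + f ![false, false]) := by
  have he : ∀ a b : Bool, (piFinTwoEquiv fun _ => Bool).symm (a, b) = ![a, b] := by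
    intro a b; funext i; fin_cases i <;> rfl
  rw [← Equiv.sum_comp (piFinTwoEquiv fun _ => Bool).symm f, Fintype.sum_prod_type,
    Fintype.sum_bool]
  simp only [Fintype.sum_bool, he]

lemma xorf_pair (a b : Bool) : xorf ![a, b] = xor a b := by
  simp [xorf, List.ofFn_succ]

lemma sum_std_apply {ι : Type*} [DecidableEq ι] [Fintype ι] (p : ι → Prop) [DecidablePred p]
    (a b : ι) :
    (∑ x ∈ Finset.univ.filter p, Matrix.single x x (1:ℂ)) a b
      = if a = b ∧ p a then 1 else 0 := by
  rw [Matrix.sum_apply, Finset.sum_filter, Finset.sum_eq_single a]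
  · by_cases hab : a = b <;> by_cases hpa : p a <;> simp [Matrix.single, hab, hpa]
  · intro x _ hx; simp [Matrix.single, hx]
  · intro h; exact absurd (Finset.mem_univ a) h

lemma mul_std_mul_apply {ι : Type*} [Fintype ι] [DecidableEq ι] (A B : Matrix ι ι ℂ)
    (x a b : ι) :
    (A * Matrix.single x x 1 * B : Matrix ι ι ℂ) a b = A a x * B x b := by
  rw [Matrix.mul_assoc, Matrix.mul_apply]
  simp only [Matrix.mul_apply, Matrix.single, of_apply]
  simp [ite_and, mul_ite, mul_zero, mul_one, ite_mul, zero_mul, Finset.sum_ite_eq,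
    Finset.mul_sum, Finset.sum_ite_eq']

lemma sqrt2_sq : ((Real.sqrt 2 : ℂ)) ^ 2 = 2 := by
  rw [← Complex.ofReal_pow, Real.sq_sqrt] <;> norm_num

lemma Hn2_apply (a b c d : Bool) :
    Hn 2 ![a, b] ![c, d]
      = ((if a && c then (-1:ℂ) else 1) * (if b && d then (-1:ℂ) else 1)) / 2 := by
  rw [Hn]
  simp only [Matrix.of_apply, Fin.prod_univ_two, Matrix.cons_val_zero, Matrix.cons_val_one,
    Matrix.head_cons, sqrt2_sq]
  rfl

noncomputable def bellv (s t : Bool) : (Fin 2 → Bool) → ℂ :=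
  fun z => if xorf z = s then (if t && z 0 then -1 else 1) / 2 else 0

noncomputable def KM (s t : Bool) : Matrix (Fin 2 → Bool) (Fin 2 → Bool) ℂ :=
  vecMulVec (bellv s t) (star (bellv s t))

lemma KM_psd (s t : Bool) : (KM s t).PosSemidef := vecMulVec_psd _

lemma B2 (s : Bool) : rhoXorP 2 s = KM s false + KM s true := by
  have key : ∀ a b c d : Bool,
      rhoXorP 2 s ![a,b] ![c,d] = (KM s false + KM s true) ![a,b] ![c,d] := by
    intro a b c d
    simp only [rhoXorP, KM, bellv, Matrix.smul_apply, Matrix.add_apply, sum_std_apply,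
      vecMulVec_apply, Pi.star_apply, xorf_pair, Matrix.cons_val_zero]
    cases s <;> cases a <;> cases b <;> cases c <;> cases d <;>
      simp [pair_eq_iff] <;> norm_num
  ext z z'
  rw [← fin2eta z, ← fin2eta z']
  exact key _ _ _ _

lemma C2 (t : Bool) : rhoXorT 2 t = KM false t + KM true t := by
  have key : ∀ a b c d : Bool,
      rhoXorT 2 t ![a,b] ![c,d] = (KM false t + KM true t) ![a,b] ![c,d] := by
    intro a b c d
    simp only [rhoXorT, KM, bellv, Matrix.smul_apply, Matrix.add_apply, Matrix.sum_apply,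
      mul_std_mul_apply, Matrix.conjTranspose_apply, vecMulVec_apply, Pi.star_apply,
      Matrix.cons_val_zero]
    rw [Finset.sum_filter]
    rw [sum_fin2bool (fun x => if xorf x = t then Hn 2 ![a,b] x * star (Hn 2 ![c,d] x) else 0)]
    simp only [Hn2_apply, xorf_pair]
    cases t <;> cases a <;> cases b <;> cases c <;> cases d <;>
      norm_num
  ext z z'
  rw [← fin2eta z, ← fin2eta z']
  exact key _ _ _ _

lemma A2 : KM false false + KM false true + (KM true false + KM true true)
    = (2:ℂ)⁻¹ • (1 : Matrix (Fin 2 → Bool) (Fin 2 → Bool) ℂ) := by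
  have key : ∀ a b c d : Bool,
      (KM false false + KM false true + (KM true false + KM true true)) ![a,b] ![c,d]
        = ((2:ℂ)⁻¹ • (1 : Matrix (Fin 2 → Bool) (Fin 2 → Bool) ℂ)) ![a,b] ![c,d] := by
    intro a b c d
    simp only [KM, bellv, Matrix.smul_apply, Matrix.add_apply, vecMulVec_apply,
      Pi.star_apply, xorf_pair, Matrix.cons_val_zero, Matrix.one_apply]
    cases a <;> cases b <;> cases c <;> cases d <;>
      simp [pair_eq_iff] <;> norm_num
  ext z z'
  rw [← fin2eta z, ← fin2eta z']
  exact key _ _ _ _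

lemma half_psd {ι : Type*} [Fintype ι] [DecidableEq ι] {A : Matrix ι ι ℂ} (h : A.PosSemidef) :
    ((1/2 : ℂ) • A).PosSemidef := by
  have := smul_psd h (c := 1/2) (by norm_num)
  simpa using this

/-- If a Hermitian `Q` is dual-feasible for the PI₀-STAR(XOR) SDP on odd-length
strings of length `n`, then `Q ⊗ ¼I₄` is dual-feasible for length `n + 2`. -/
theorem dual_feasible_step {n : ℕ} (hodd : Odd n)
    (Q : Matrix (Fin n → Bool) (Fin n → Bool) ℂ) (hQ : Q.IsHermitian)
    (h : ∀ op ot : Bool, (Q - (rhoXorP n op + rhoXorT n ot)).PosSemidef) :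
    ∀ op ot : Bool,
      ((Q ⊗ₖ ((1/4 : ℂ) • (1 : Matrix (Fin 2 → Bool) (Fin 2 → Bool) ℂ)))
        - (rhoXorP' n op + rhoXorT' n ot)).PosSemidef := by
  intro op ot
  have hn : 1 ≤ n := hodd.pos
  have key : (Q ⊗ₖ ((1/4 : ℂ) • (1 : Matrix (Fin 2 → Bool) (Fin 2 → Bool) ℂ)))
        - (rhoXorP' n op + rhoXorT' n ot)
      = ((1/2 : ℂ) • ((Q - (rhoXorP n op + rhoXorT n ot)) ⊗ₖ KM false false)
        + (1/2 : ℂ) • ((Q - (rhoXorP n op + rhoXorT n (!ot))) ⊗ₖ KM false true))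
      + ((1/2 : ℂ) • ((Q - (rhoXorP n (!op) + rhoXorT n ot)) ⊗ₖ KM true false)
        + (1/2 : ℂ) • ((Q - (rhoXorP n (!op) + rhoXorT n (!ot))) ⊗ₖ KM true true)) := by
    rw [L1 hn op, L1T hn ot, B2 false, B2 true, C2 false, C2 true]
    rw [show (1 : Matrix (Fin 2 → Bool) (Fin 2 → Bool) ℂ)
        = (2:ℂ) • (KM false false + KM false true + (KM true false + KM true true)) from by
      rw [A2, smul_smul]; norm_num]
    simp only [Matrix.kronecker_add, Matrix.add_kronecker, sub_kron, kron_sub,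
      Matrix.kronecker_smul, Matrix.smul_kronecker]
    module
  rw [key]
  exact PosSemidef.add
    (PosSemidef.add (half_psd (kron_psd (h op ot) (KM_psd false false)))
      (half_psd (kron_psd (h op (!ot)) (KM_psd false true))))
    (PosSemidef.add (half_psd (kron_psd (h (!op) ot) (KM_psd true false)))
      (half_psd (kron_psd (h (!op) (!ot)) (KM_psd true true))))
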